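/- Let T : ℝ → ℝ be integrable with ∫_{-∞}^{∞} |T(λ)| dλ < ∞, and let g : ℝ → ℝ be C¹ with g(0) = 1, ∫ g² = 1, and ∫ (g')² < ∞. Define g_{λ₀}(λ) = g(λ/λ₀)/√λ₀. If for every λ₀ > 0 the inequality ∫ g_{λ₀}(λ)² T(λ) dλ ≥ −C ∫ (g_{λ₀}'(λ))² dλ holds for a fixed constant C > 0, then ∫_{-∞}^{∞} T(λ) dλ ≥ 0. -/

import Mathlib

open MeasureTheory Real Filter

theorem snec_implies_anec
    (T g : ℝ → ℝ) (C : ℝ) (hC : 0 < C)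
    (hT : Integrable T)
    (hg : ContDiff ℝ 1 g) (hg0 : g 0 = 1)
    (hgnorm : ∫ l : ℝ, (g l) ^ 2 = 1)
    (hg' : Integrable (fun l : ℝ => (deriv g l) ^ 2))
    (hSNEC : ∀ l₀ : ℝ, 0 < l₀ →
      ∫ l : ℝ, (g (l / l₀) / Real.sqrt l₀) ^ 2 * T l ≥
        -C * ∫ l : ℝ, (deriv (fun x : ℝ => g (x / l₀) / Real.sqrt l₀) l) ^ 2) :
    ∫ l : ℝ, T l ≥ 0 := by
  have hgc : Continuous g := hg.continuous
  have hg'c : Continuous (deriv g) := hg.continuous_deriv le_rfl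
  have hgdiff : Differentiable ℝ g := hg.differentiable one_ne_zero
  -- integrability of g²
  have hg2int : Integrable (fun l : ℝ => (g l) ^ 2) := by
    by_contra h
    rw [integral_undef h] at hgnorm
    norm_num at hgnorm
  -- the derivative of g² is integrable
  set φ : ℝ → ℝ := fun x => 2 * g x * deriv g x with hφdef
  have hφc : Continuous φ := by continuity
  have hφint : Integrable φ := by
    refine (hg2int.add hg').mono' hφc.aestronglyMeasurable ?_
    filter_upwards with x
    have h1 : |2 * g x * deriv g x| ≤ (g x) ^ 2 + (deriv g x) ^ 2 :=
      abs_le.mpr ⟨by nlinarith [sq_nonneg (g x + deriv g x)],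
        by nlinarith [sq_nonneg (g x - deriv g x)]⟩
    simpa [Real.norm_eq_abs, hφdef] using h1
  have hφabsint : Integrable (fun x => |φ x|) := hφint.abs
  -- bound on g²
  set M : ℝ := 1 + ∫ x : ℝ, |φ x| with hMdef
  have hφabsnn : 0 ≤ᵐ[volume] fun x => |φ x| := Filter.Eventually.of_forall fun x => abs_nonneg _
  have hFderiv : ∀ x : ℝ, HasDerivAt (fun t => (g t) ^ 2) (φ x) x := by
    intro x
    have := (hgdiff x).hasDerivAt
    have h2 := this.fun_pow 2
    simpa [hφdef, mul_comm, mul_assoc, mul_left_comm] using h2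
  have hgbound : ∀ x : ℝ, (g x) ^ 2 ≤ M := by
    intro x
    have hint : ∀ a b : ℝ, IntervalIntegrable φ volume a b := fun a b =>
      hφint.intervalIntegrable
    have hftc : ∫ t in (0:ℝ)..x, φ t = (g x) ^ 2 - (g 0) ^ 2 := by
      exact intervalIntegral.integral_eq_sub_of_hasDerivAt
        (fun t _ => hFderiv t) (hint 0 x)
    have key : ∀ u v : ℝ, u ≤ v → |∫ t in u..v, φ t| ≤ ∫ t : ℝ, |φ t| := by
      intro u v huv
      calc |∫ t in u..v, φ t| ≤ ∫ t in u..v, |φ t| :=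
            intervalIntegral.abs_integral_le_integral_abs huv
        _ = ∫ t in Set.Ioc u v, |φ t| := intervalIntegral.integral_of_le huv
        _ ≤ ∫ t : ℝ, |φ t| := setIntegral_le_integral hφabsint hφabsnn
    have habs : |∫ t in (0:ℝ)..x, φ t| ≤ ∫ t : ℝ, |φ t| := by
      rcases le_total 0 x with hx | hx
      · exact key 0 x hx
      · rw [intervalIntegral.integral_symm, abs_neg]
        exact key x 0 hx
    have := hftc ▸ habs
    rw [hg0] at hftc
    nlinarith [le_abs_self (∫ t in (0:ℝ)..x, φ t), habs]
  have hM1 : 1 ≤ M := by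
    have : 0 ≤ ∫ x : ℝ, |φ x| := integral_nonneg fun x => abs_nonneg _
    linarith
  -- a l₀ := the rescaled smeared integral
  set a : ℝ → ℝ := fun l₀ => ∫ l : ℝ, (g (l / l₀)) ^ 2 * T l with hadef
  set K : ℝ := ∫ l : ℝ, (deriv g l) ^ 2 with hKdef
  -- dominated convergence: a → ∫ T
  have ha_tendsto : Tendsto a atTop (nhds (∫ l : ℝ, T l)) := by
    apply tendsto_integral_filter_of_dominated_convergence (fun l => M * |T l|)
    · filter_upwards with l₀
      exact ((hgc.comp (continuous_id.div_const l₀)).pow 2).aestronglyMeasurable.mul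
        hT.aestronglyMeasurable
    · filter_upwards with l₀
      filter_upwards with l
      have h1 : (g (l / l₀)) ^ 2 ≤ M := hgbound _
      have h2 : (0:ℝ) ≤ (g (l / l₀)) ^ 2 := sq_nonneg _
      calc ‖(g (l / l₀)) ^ 2 * T l‖ = (g (l / l₀)) ^ 2 * |T l| := by
            rw [norm_mul, Real.norm_eq_abs, Real.norm_eq_abs, abs_of_nonneg h2]
        _ ≤ M * |T l| := by
            exact mul_le_mul_of_nonneg_right h1 (abs_nonneg _)
    · exact hT.abs.const_mul M
    · filter_upwards with l
      have hdiv : Tendsto (fun l₀ : ℝ => l / l₀) atTop (nhds 0) := by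
        simpa [div_eq_mul_inv] using tendsto_inv_atTop_zero.const_mul l
      have := ((hgc.tendsto 0).comp hdiv)
      have hsq : Tendsto (fun l₀ : ℝ => (g (l / l₀)) ^ 2) atTop (nhds 1) := by
        have := this.pow 2
        simpa [hg0] using this
      have := hsq.mul_const (T l)
      simpa using this
  -- lower bound function
  have hb_tendsto : Tendsto (fun l₀ : ℝ => -C * l₀⁻¹ * K) atTop (nhds 0) := by
    have := tendsto_inv_atTop_zero.const_mul (-C)
    have := this.mul_const K
    simpa using this
  have hineq : ∀ᶠ l₀ : ℝ in atTop, -C * l₀⁻¹ * K ≤ a l₀ := by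
    filter_upwards [eventually_gt_atTop (0:ℝ)] with l₀ hl₀
    have hs : Real.sqrt l₀ > 0 := Real.sqrt_pos.mpr hl₀
    have hs2 : (Real.sqrt l₀) ^ 2 = l₀ := Real.sq_sqrt hl₀.le
    -- compute deriv of the rescaled function
    have hderiv : ∀ l : ℝ, deriv (fun x : ℝ => g (x / l₀) / Real.sqrt l₀) l
        = deriv g (l / l₀) * l₀⁻¹ / Real.sqrt l₀ := by
      intro l
      have h1 : HasDerivAt (fun x : ℝ => x / l₀) l₀⁻¹ l := by
        simpa using (hasDerivAt_id l).div_const l₀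
      have h2 : HasDerivAt (fun x : ℝ => g (x / l₀)) (deriv g (l / l₀) * l₀⁻¹) l :=
        ((hgdiff (l / l₀)).hasDerivAt.comp l h1)
      exact (h2.div_const (Real.sqrt l₀)).deriv
    have hLHS : ∫ l : ℝ, (g (l / l₀) / Real.sqrt l₀) ^ 2 * T l = l₀⁻¹ * a l₀ := by
      rw [hadef]
      rw [← integral_const_mul]
      congr 1 with l
      field_simp [div_pow, hs2]
      rw [hs2]
      ring
    have hRHS : ∫ l : ℝ, (deriv (fun x : ℝ => g (x / l₀) / Real.sqrt l₀) l) ^ 2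
        = l₀⁻¹ * (l₀⁻¹ * K) := by
      have : ∀ l : ℝ, (deriv (fun x : ℝ => g (x / l₀) / Real.sqrt l₀) l) ^ 2
          = (fun u => (deriv g u) ^ 2) (l / l₀) * (l₀⁻¹ ^ 2 / l₀) := by
        intro l
        rw [hderiv l]
        rw [div_pow, mul_pow, hs2]
        ring
      rw [integral_congr_ae (Filter.Eventually.of_forall this)]
      rw [integral_mul_const, MeasureTheory.Measure.integral_comp_div (fun u => (deriv g u) ^ 2) l₀,
        abs_of_pos hl₀]
      rw [hKdef]
      simp only [smul_eq_mul]
      field_simp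
    have h := hSNEC l₀ hl₀
    rw [hLHS, hRHS] at h
    -- h : l₀⁻¹ * a l₀ ≥ -C * (l₀⁻¹ * (l₀⁻¹ * K))
    have hpos : (0:ℝ) < l₀⁻¹ := inv_pos.mpr hl₀
    nlinarith [h]
  have := le_of_tendsto_of_tendsto hb_tendsto ha_tendsto hineq
  simpa using this
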